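/- Suppose X_{t+1} = X_t(Id − E[A_t]) + B_t where A_t ∈ ℝ^{n×n} are independent random nonnegative-definite matrices with ‖A_t‖₂ ≤ 2 almost surely, B_t ∈ ℝ^{p×n} satisfy ∑_t ‖B_t‖_F < ∞, and Q is an orthogonal projection such that for every t, the product ∏_{s=t}^T (Id − E[A_s])·Q → 0 as T → ∞. Then X_t Q → 0. -/

import Mathlib

open MeasureTheory ProbabilityTheory Matrix Filter

noncomputable def frobNorm {m n : ℕ} (A : Matrix (Fin m) (Fin n) ℝ) : ℝ :=
  Real.sqrt (∑ i, ∑ j, (A i j) ^ 2)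

noncomputable def specNorm {m n : ℕ} (A : Matrix (Fin m) (Fin n) ℝ) : ℝ :=
  ‖(LinearMap.toContinuousLinearMap
    (Matrix.toEuclideanLin A : EuclideanSpace ℝ (Fin n) →ₗ[ℝ] EuclideanSpace ℝ (Fin m)))‖

/-- Entrywise expectation of a random matrix. -/
noncomputable def mExp {Ω : Type*} [MeasureSpace Ω] {m n : ℕ}
    (M : Ω → Matrix (Fin m) (Fin n) ℝ) : Matrix (Fin m) (Fin n) ℝ :=
  Matrix.of fun i j => ∫ ω, M ω i j

/-- The ordered product `M t * M (t+1) * ⋯ * M T`. -/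
noncomputable def ordProd {n : ℕ} (M : ℕ → Matrix (Fin n) (Fin n) ℝ) (t T : ℕ) :
    Matrix (Fin n) (Fin n) ℝ :=
  ((List.range (T + 1 - t)).map (fun k => M (t + k))).prod

noncomputable def phi {m n : ℕ} (A : Matrix (Fin m) (Fin n) ℝ) :
    EuclideanSpace ℝ (Fin n) →L[ℝ] EuclideanSpace ℝ (Fin m) :=
  LinearMap.toContinuousLinearMap (Matrix.toEuclideanLin A)

lemma specNorm_eq {m n : ℕ} (A : Matrix (Fin m) (Fin n) ℝ) : specNorm A = ‖phi A‖ := rfl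

lemma phi_apply {m n : ℕ} (A : Matrix (Fin m) (Fin n) ℝ) (x : EuclideanSpace ℝ (Fin n)) :
    phi A x = (WithLp.equiv 2 (Fin m → ℝ)).symm (A *ᵥ (WithLp.equiv 2 (Fin n → ℝ)) x) := rfl

lemma phi_mul {m n k : ℕ} (A : Matrix (Fin m) (Fin n) ℝ) (B : Matrix (Fin n) (Fin k) ℝ) :
    phi (A * B) = (phi A).comp (phi B) := by
  ext x i
  simp [phi_apply, Matrix.mulVec_mulVec]

lemma norm_symm_eq {n : ℕ} (v : Fin n → ℝ) :
    ‖(WithLp.equiv 2 (Fin n → ℝ)).symm v‖ = Real.sqrt (∑ i, (v i) ^ 2) := by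
  rw [EuclideanSpace.norm_eq]
  simp [Real.norm_eq_abs, sq_abs]

lemma norm_phi_apply {m n : ℕ} (A : Matrix (Fin m) (Fin n) ℝ) (v : Fin n → ℝ) :
    ‖phi A ((WithLp.equiv 2 (Fin n → ℝ)).symm v)‖ = Real.sqrt (∑ i, (A *ᵥ v) i ^ 2) := by
  rw [phi_apply]
  simp [norm_symm_eq]
  exact norm_symm_eq _

lemma specNorm_le_frobNorm {m n : ℕ} (A : Matrix (Fin m) (Fin n) ℝ) :
    specNorm A ≤ frobNorm A := by
  rw [specNorm_eq]
  apply ContinuousLinearMap.opNorm_le_bound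
  · exact Real.sqrt_nonneg _
  · intro x
    set v := (WithLp.equiv 2 (Fin n → ℝ)) x with hv
    have hx : x = (WithLp.equiv 2 (Fin n → ℝ)).symm v := rfl
    rw [hx, norm_phi_apply, norm_symm_eq]
    rw [frobNorm, ← Real.sqrt_mul (by positivity)]
    apply Real.sqrt_le_sqrt
    rw [Finset.sum_mul]
    apply Finset.sum_le_sum
    intro i _
    calc ((A *ᵥ v) i) ^ 2 = (∑ j, A i j * v j) ^ 2 := by rfl
    _ ≤ (∑ j, (A i j) ^ 2) * (∑ j, (v j) ^ 2) := Finset.sum_mul_sq_le_sq_mul_sq _ _ _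






lemma norm_symm_eq_dp {n : ℕ} (v : Fin n → ℝ) :
    ‖(WithLp.equiv 2 (Fin n → ℝ)).symm v‖ = Real.sqrt (v ⬝ᵥ v) := by
  rw [EuclideanSpace.norm_eq]
  simp [Real.norm_eq_abs, sq_abs, dotProduct, ← sq]

lemma dp_mulVec_left {m n : ℕ} (M : Matrix (Fin m) (Fin n) ℝ) (v : Fin n → ℝ) (w : Fin m → ℝ) :
    (M *ᵥ v) ⬝ᵥ w = v ⬝ᵥ (Mᵀ *ᵥ w) := by
  rw [dotProduct_comm, Matrix.dotProduct_mulVec, ← Matrix.mulVec_transpose,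
    dotProduct_comm]

lemma mulVec_norm_le {m n : ℕ} (A : Matrix (Fin m) (Fin n) ℝ) (v : Fin n → ℝ) :
    Real.sqrt ((A *ᵥ v) ⬝ᵥ (A *ᵥ v)) ≤ specNorm A * Real.sqrt (v ⬝ᵥ v) := by
  have := (phi A).le_opNorm ((WithLp.equiv 2 (Fin n → ℝ)).symm v)
  rw [phi_apply, norm_symm_eq_dp, norm_symm_eq_dp] at this
  simp only [Equiv.apply_symm_apply] at this
  rwa [specNorm_eq]

lemma specNorm_one_sub_le {n : ℕ} (S : Matrix (Fin n) (Fin n) ℝ) (hsymm : Sᵀ = S)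
    (h0 : ∀ v, 0 ≤ v ⬝ᵥ S *ᵥ v) (h2 : ∀ v, v ⬝ᵥ S *ᵥ v ≤ 2 * (v ⬝ᵥ v)) :
    specNorm (1 - S) ≤ 1 := by
  have hherm : S.IsHermitian := by
    show Sᴴ = S
    simpa using hsymm
  have hPS : S.PosSemidef := PosSemidef.of_dotProduct_mulVec_nonneg hherm (fun x => by simpa using h0 x)
  obtain ⟨C, hCsymm, hC2⟩ : ∃ C : Matrix (Fin n) (Fin n) ℝ, Cᵀ = C ∧ C * C = S :=
    by
      open scoped MatrixOrder in
      exact ⟨CFC.sqrt S, Matrix.IsSymm.eq (by simpa using (CFC.sqrt_nonneg S).posSemidef.1),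
        CFC.sqrt_mul_sqrt_self S hPS.nonneg⟩
  have key : ∀ v : Fin n → ℝ, ((1 - S) *ᵥ v) ⬝ᵥ ((1 - S) *ᵥ v) ≤ v ⬝ᵥ v := by
    intro v
    have hexp : (1 - S) *ᵥ v = v - S *ᵥ v := by
      rw [Matrix.sub_mulVec, Matrix.one_mulVec]
    set w := C *ᵥ v with hw
    have hww : w ⬝ᵥ w = v ⬝ᵥ (S *ᵥ v) := by
      rw [hw, dp_mulVec_left, hCsymm, Matrix.mulVec_mulVec, hC2]
    have hwSw : w ⬝ᵥ (S *ᵥ w) = (S *ᵥ v) ⬝ᵥ (S *ᵥ v) := by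
      rw [hw, Matrix.mulVec_mulVec, dp_mulVec_left, hCsymm, Matrix.mulVec_mulVec]
      rw [dp_mulVec_left, hsymm, Matrix.mulVec_mulVec]
      congr 2
      rw [← hC2]
      noncomm_ring
    have h2w := h2 w
    rw [hww] at h2w
    rw [hexp]
    have hsv : (S *ᵥ v) ⬝ᵥ v = v ⬝ᵥ (S *ᵥ v) := by
      rw [dp_mulVec_left, hsymm]
    rw [dotProduct_sub, sub_dotProduct, sub_dotProduct, hsv]
    rw [hwSw] at h2w
    linarith
  rw [specNorm_eq]
  apply ContinuousLinearMap.opNorm_le_bound _ zero_le_one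
  intro x
  set v := (WithLp.equiv 2 (Fin n → ℝ)) x with hv
  have hx : x = (WithLp.equiv 2 (Fin n → ℝ)).symm v := rfl
  rw [hx, phi_apply, norm_symm_eq_dp, one_mul, norm_symm_eq_dp]
  exact Real.sqrt_le_sqrt (by simpa using key v)






lemma dp_self_nonneg {n : ℕ} (v : Fin n → ℝ) : 0 ≤ v ⬝ᵥ v :=
  Finset.sum_nonneg fun i _ => mul_self_nonneg _

lemma dp_cauchy {n : ℕ} (v w : Fin n → ℝ) :
    v ⬝ᵥ w ≤ Real.sqrt (v ⬝ᵥ v) * Real.sqrt (w ⬝ᵥ w) := by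
  have h1 : v ⬝ᵥ w ≤ |v ⬝ᵥ w| := le_abs_self _
  have h2 : |v ⬝ᵥ w| = Real.sqrt ((v ⬝ᵥ w) ^ 2) := (Real.sqrt_sq_eq_abs _).symm
  rw [h2] at h1
  refine h1.trans ?_
  rw [← Real.sqrt_mul (dp_self_nonneg v)]
  apply Real.sqrt_le_sqrt
  have := Finset.sum_mul_sq_le_sq_mul_sq Finset.univ v w
  simpa [dotProduct, ← sq] using this

lemma qf_eq_integral {Ω : Type*} [MeasureSpace Ω] {n : ℕ}
    (A : Ω → Matrix (Fin n) (Fin n) ℝ)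
    (hint : ∀ i j, Integrable (fun ω => A ω i j)) (v : Fin n → ℝ) :
    v ⬝ᵥ (mExp A) *ᵥ v = ∫ ω, v ⬝ᵥ (A ω) *ᵥ v := by
  have h1 : ∀ ω, v ⬝ᵥ (A ω) *ᵥ v = ∑ i, ∑ j, v i * A ω i j * v j := by
    intro ω
    simp [dotProduct, Matrix.mulVec, Finset.mul_sum, mul_assoc]
  have h2 : v ⬝ᵥ (mExp A) *ᵥ v = ∑ i, ∑ j, v i * (∫ ω, A ω i j) * v j := by
    simp [dotProduct, Matrix.mulVec, mExp, Finset.mul_sum, mul_assoc]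
  rw [h2]
  have : ∀ i j : Fin n, v i * (∫ ω, A ω i j) * v j = ∫ ω, v i * A ω i j * v j := by
    intro i j
    rw [integral_mul_const, integral_const_mul]
  simp_rw [this, h1]
  rw [eq_comm, integral_finset_sum _ (fun i _ => integrable_finset_sum _
    (fun j _ => ((hint i j).const_mul _).mul_const _))]
  refine Finset.sum_congr rfl fun i _ => ?_
  rw [integral_finset_sum _ (fun j _ => ((hint i j).const_mul _).mul_const _)]

lemma step_bound {Ω : Type*} [MeasureSpace Ω] [IsProbabilityMeasure (volume : Measure Ω)]
    {n : ℕ} (A : Ω → Matrix (Fin n) (Fin n) ℝ)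
    (hpsd : ∀ᵐ ω, (A ω).PosSemidef) (hbdd : ∀ᵐ ω, specNorm (A ω) ≤ 2)
    (hint : ∀ i j, Integrable (fun ω => A ω i j)) :
    specNorm (1 - mExp A) ≤ 1 := by
  apply specNorm_one_sub_le
  · -- symmetry
    ext i j
    show (mExp A) j i = mExp A i j
    have : ∀ᵐ ω, A ω j i = A ω i j := by
      filter_upwards [hpsd] with ω hω
      have := hω.1
      have h := congrFun (congrFun this j) i
      simpa [Matrix.conjTranspose_apply] using h.symm
    exact integral_congr_ae this
  · intro v
    rw [qf_eq_integral A hint v]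
    apply integral_nonneg_of_ae
    filter_upwards [hpsd] with ω hω
    simpa using hω.dotProduct_mulVec_nonneg v
  · intro v
    rw [qf_eq_integral A hint v]
    have hInt : Integrable (fun ω => v ⬝ᵥ (A ω) *ᵥ v) := by
      have : (fun ω => v ⬝ᵥ (A ω) *ᵥ v) = fun ω => ∑ i, ∑ j, v i * A ω i j * v j := by
        ext ω
        simp [dotProduct, Matrix.mulVec, Finset.mul_sum, mul_assoc]
      rw [this]
      exact integrable_finset_sum _ fun i _ => integrable_finset_sum _
        fun j _ => ((hint i j).const_mul _).mul_const _
    calc ∫ ω, v ⬝ᵥ (A ω) *ᵥ v ≤ ∫ _ω : Ω, 2 * (v ⬝ᵥ v) := by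
          apply integral_mono_ae hInt (integrable_const _)
          filter_upwards [hbdd] with ω hω
          calc v ⬝ᵥ (A ω) *ᵥ v
              ≤ Real.sqrt (v ⬝ᵥ v) * Real.sqrt ((A ω *ᵥ v) ⬝ᵥ (A ω *ᵥ v)) := dp_cauchy _ _
            _ ≤ Real.sqrt (v ⬝ᵥ v) * (specNorm (A ω) * Real.sqrt (v ⬝ᵥ v)) := by
                apply mul_le_mul_of_nonneg_left (mulVec_norm_le _ _) (Real.sqrt_nonneg _)
            _ ≤ Real.sqrt (v ⬝ᵥ v) * (2 * Real.sqrt (v ⬝ᵥ v)) := by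
                apply mul_le_mul_of_nonneg_left _ (Real.sqrt_nonneg _)
                exact mul_le_mul_of_nonneg_right hω (Real.sqrt_nonneg _)
            _ = 2 * (Real.sqrt (v ⬝ᵥ v) * Real.sqrt (v ⬝ᵥ v)) := by ring
            _ = 2 * (v ⬝ᵥ v) := by rw [Real.mul_self_sqrt (dp_self_nonneg v)]
      _ = 2 * (v ⬝ᵥ v) := by simp







lemma phi_add {m n : ℕ} (A B : Matrix (Fin m) (Fin n) ℝ) :
    phi (A + B) = phi A + phi B := by
  ext x i
  simp [phi_apply, Matrix.add_mulVec]

lemma phi_zero {m n : ℕ} : phi (0 : Matrix (Fin m) (Fin n) ℝ) = 0 := by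
  ext x i
  simp [phi_apply]

lemma phi_one {n : ℕ} : phi (1 : Matrix (Fin n) (Fin n) ℝ) = ContinuousLinearMap.id ℝ _ := by
  ext x i
  simp [phi_apply]

lemma specNorm_nonneg {m n : ℕ} (A : Matrix (Fin m) (Fin n) ℝ) : 0 ≤ specNorm A :=
  norm_nonneg _

lemma specNorm_zero {m n : ℕ} : specNorm (0 : Matrix (Fin m) (Fin n) ℝ) = 0 := by
  rw [specNorm_eq, phi_zero, norm_zero]

lemma specNorm_mul_le {m n k : ℕ} (A : Matrix (Fin m) (Fin n) ℝ)
    (B : Matrix (Fin n) (Fin k) ℝ) : specNorm (A * B) ≤ specNorm A * specNorm B := by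
  rw [specNorm_eq, specNorm_eq, specNorm_eq, phi_mul]
  exact ContinuousLinearMap.opNorm_comp_le _ _

lemma specNorm_add_le {m n : ℕ} (A B : Matrix (Fin m) (Fin n) ℝ) :
    specNorm (A + B) ≤ specNorm A + specNorm B := by
  rw [specNorm_eq, specNorm_eq, specNorm_eq, phi_add]
  exact norm_add_le _ _

lemma specNorm_one_le {n : ℕ} : specNorm (1 : Matrix (Fin n) (Fin n) ℝ) ≤ 1 := by
  rw [specNorm_eq, phi_one]
  exact ContinuousLinearMap.norm_id_le

lemma phi_sum {m n : ℕ} (s : Finset ℕ) (f : ℕ → Matrix (Fin m) (Fin n) ℝ) :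
    phi (∑ t ∈ s, f t) = ∑ t ∈ s, phi (f t) := by
  induction s using Finset.induction with
  | empty => simp [phi_zero]
  | insert _ _ h ih => rw [Finset.sum_insert h, Finset.sum_insert h, phi_add, ih]

lemma specNorm_sum_le {m n : ℕ} (s : Finset ℕ) (f : ℕ → Matrix (Fin m) (Fin n) ℝ) :
    specNorm (∑ t ∈ s, f t) ≤ ∑ t ∈ s, specNorm (f t) := by
  rw [specNorm_eq, phi_sum]
  exact (norm_sum_le _ _).trans (le_of_eq rfl)

lemma continuous_specNorm {m n : ℕ} :
    Continuous (fun A : Matrix (Fin m) (Fin n) ℝ => specNorm A) := by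
  have hphi : Continuous (fun A : Matrix (Fin m) (Fin n) ℝ => phi A) := by
    have : IsLinearMap ℝ (fun A : Matrix (Fin m) (Fin n) ℝ => phi A) :=
      ⟨phi_add, fun c A => by ext x i; simp [phi_apply, Matrix.smul_mulVec]⟩
    exact (IsLinearMap.mk' _ this).continuous_of_finiteDimensional
  exact continuous_norm.comp hphi


lemma ordProd_empty {n : ℕ} (M : ℕ → Matrix (Fin n) (Fin n) ℝ) (T : ℕ) :
    ordProd M (T + 1) T = 1 := by
  simp [ordProd, Nat.sub_self]

lemma ordProd_self {n : ℕ} (M : ℕ → Matrix (Fin n) (Fin n) ℝ) (t : ℕ) :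
    ordProd M t t = M t := by
  have h : t + 1 - t = 1 := by omega
  rw [ordProd, h]
  simp [List.range_succ]

lemma ordProd_succ_right {n : ℕ} (M : ℕ → Matrix (Fin n) (Fin n) ℝ) {t T : ℕ}
    (h : t ≤ T + 1) : ordProd M t (T + 1) = ordProd M t T * M (T + 1) := by
  have h1 : T + 1 + 1 - t = (T + 1 - t) + 1 := by omega
  have h2 : t + (T + 1 - t) = T + 1 := by omega
  rw [ordProd, h1, List.range_succ, List.map_append, List.prod_append]
  simp [ordProd, h2]

lemma specNorm_ordProd_le {n : ℕ} (M : ℕ → Matrix (Fin n) (Fin n) ℝ)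
    (hM : ∀ s, specNorm (M s) ≤ 1) (t T : ℕ) : specNorm (ordProd M t T) ≤ 1 := by
  rw [ordProd]
  generalize T + 1 - t = k
  induction k generalizing t with
  | zero => simpa using specNorm_one_le
  | succ k ih =>
      rw [List.range_succ, List.map_append, List.prod_append]
      calc specNorm (((List.range k).map fun k => M (t + k)).prod * ([M (t + k)]).prod)
          ≤ specNorm ((List.range k).map fun k => M (t + k)).prod *
            specNorm ([M (t + k)]).prod := specNorm_mul_le _ _
        _ ≤ 1 * 1 := by
            apply mul_le_mul (ih t) _ (specNorm_nonneg _) zero_le_one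
            simpa using hM (t + k)
        _ = 1 := by ring

lemma closed_form {p n : ℕ} (M : ℕ → Matrix (Fin n) (Fin n) ℝ)
    (B : ℕ → Matrix (Fin p) (Fin n) ℝ) (X : ℕ → Matrix (Fin p) (Fin n) ℝ)
    (hrec : ∀ t, X (t + 1) = X t * M t + B t) (T : ℕ) :
    X (T + 1) = X 0 * ordProd M 0 T + ∑ t ∈ Finset.range (T + 1), B t * ordProd M (t + 1) T := by
  induction T with
  | zero =>
      rw [hrec 0, ordProd_self]
      simp [ordProd_empty]
  | succ T ih =>
      rw [hrec (T + 1), ih]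
      rw [Matrix.add_mul]
      rw [Matrix.sum_mul]
      rw [ordProd_succ_right M (Nat.zero_le (T + 1))]
      rw [Finset.sum_range_succ (f := fun t => B t * ordProd M (t + 1) (T + 1))]
      rw [ordProd_empty, Matrix.mul_one, Matrix.mul_assoc]
      have hs : ∑ t ∈ Finset.range (T + 1), B t * ordProd M (t + 1) T * M (T + 1)
          = ∑ t ∈ Finset.range (T + 1), B t * ordProd M (t + 1) (T + 1) := by
        refine Finset.sum_congr rfl fun t ht => ?_
        rw [ordProd_succ_right M (by have := Finset.mem_range.mp ht; omega), Matrix.mul_assoc]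
      rw [hs, add_assoc]

lemma tendsto_of_specNorm {p n : ℕ} (f : ℕ → Matrix (Fin p) (Fin n) ℝ)
    (h : Tendsto (fun t => specNorm (f t)) atTop (nhds 0)) :
    Tendsto f atTop (nhds 0) := by
  have hphi : Tendsto (fun t => phi (f t)) atTop (nhds 0) := by
    rw [tendsto_zero_iff_norm_tendsto_zero]
    exact h
  -- recover f from phi via the linear equivalence
  let Φ : Matrix (Fin p) (Fin n) ℝ ≃ₗ[ℝ]
      (EuclideanSpace ℝ (Fin n) →L[ℝ] EuclideanSpace ℝ (Fin p)) :=
    Matrix.toEuclideanLin.trans LinearMap.toContinuousLinearMap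
  have hfeq : ∀ t, f t = Φ.symm (phi (f t)) := by
    intro t
    simp [Φ, phi]
  have hcont : Continuous (Φ.symm : _ → Matrix (Fin p) (Fin n) ℝ) :=
    Φ.symm.toLinearMap.continuous_of_finiteDimensional
  have := (hcont.tendsto 0).comp hphi
  simp only [Function.comp_def] at this
  have h0 : Φ.symm 0 = 0 := map_zero _
  rw [h0] at this
  exact Tendsto.congr (fun t => (hfeq t).symm) this

lemma sum_limit (c : ℕ → ℝ) (hc : ∀ t, 0 ≤ c t) (hsum : Summable c)
    (g : ℕ → ℕ → ℝ) (K : ℝ) (hK : 0 ≤ K) (hg0 : ∀ t T, 0 ≤ g t T)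
    (hgK : ∀ t T, g t T ≤ K) (hg : ∀ t, Tendsto (fun T => g t T) atTop (nhds 0)) :
    Tendsto (fun T => ∑ t ∈ Finset.range (T + 1), c t * g t T) atTop (nhds 0) := by
  rw [Metric.tendsto_atTop]
  intro ε hε
  have hK1 : (0:ℝ) < K + 1 := by linarith
  set tail : ℕ → ℝ := fun N => ∑' k, c (N + k) with htaildef
  have htail : Tendsto tail atTop (nhds 0) := by
    have := tendsto_sum_nat_add c
    refine this.congr fun N => ?_
    exact tsum_congr fun k => by rw [add_comm]
  have htail_nonneg : ∀ N, 0 ≤ tail N := fun N => tsum_nonneg fun k => hc _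
  obtain ⟨N, hN⟩ : ∃ N, tail N < ε / (2 * (K + 1)) := by
    have := (htail.eventually (eventually_lt_nhds (by positivity : (0:ℝ) < ε / (2 * (K + 1))))).exists
    exact this
  have hu : Tendsto (fun T => ∑ t ∈ Finset.range N, c t * g t T) atTop (nhds 0) := by
    have := tendsto_finset_sum (Finset.range N)
      (fun t _ => ((hg t).const_mul (c t) : Tendsto (fun T => c t * g t T) atTop (nhds (c t * 0))))
    simpa using this
  rw [Metric.tendsto_atTop] at hu
  obtain ⟨T0, hT0⟩ := hu (ε / 2) (by positivity)
  refine ⟨max T0 N, fun T hT => ?_⟩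
  have hTN : N ≤ T := le_trans (le_max_right _ _) hT
  have hT0' := hT0 T (le_trans (le_max_left _ _) hT)
  rw [Real.dist_eq, sub_zero] at hT0' ⊢
  have hsplit : ∑ t ∈ Finset.range N, c t * g t T + ∑ t ∈ Finset.Ico N (T + 1), c t * g t T
      = ∑ t ∈ Finset.range (T + 1), c t * g t T :=
    Finset.sum_range_add_sum_Ico _ (by omega)
  have hrest : ∑ t ∈ Finset.Ico N (T + 1), c t * g t T ≤ (K + 1) * tail N := by
    calc ∑ t ∈ Finset.Ico N (T + 1), c t * g t T
        ≤ ∑ t ∈ Finset.Ico N (T + 1), c t * K := by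
          apply Finset.sum_le_sum
          intro t _
          exact mul_le_mul_of_nonneg_left (hgK t T) (hc t)
      _ = K * ∑ t ∈ Finset.Ico N (T + 1), c t := by rw [Finset.mul_sum]; congr 1; ext; ring
      _ ≤ K * tail N := by
          apply mul_le_mul_of_nonneg_left _ hK
          rw [Finset.sum_Ico_eq_sum_range]
          have hsh : Summable (fun k => c (N + k)) := by
            simpa [add_comm] using (summable_nat_add_iff N).2 hsum
          exact Summable.sum_le_tsum _ (fun k _ => hc _) hsh
      _ ≤ (K + 1) * tail N := by
          apply mul_le_mul_of_nonneg_right _ (htail_nonneg N)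
          linarith
  have hSnn : (0:ℝ) ≤ ∑ t ∈ Finset.range (T + 1), c t * g t T :=
    Finset.sum_nonneg fun t _ => mul_nonneg (hc t) (hg0 t T)
  rw [abs_of_nonneg hSnn]
  have husmall : ∑ t ∈ Finset.range N, c t * g t T < ε / 2 :=
    lt_of_le_of_lt (le_abs_self _) hT0'
  have : (K + 1) * tail N < ε / 2 := by
    calc (K + 1) * tail N < (K + 1) * (ε / (2 * (K + 1))) :=
          mul_lt_mul_of_pos_left hN hK1
      _ = ε / 2 := by field_simp
  linarith [hrest, husmall, hsplit, this]

/-- One-sided decay: if `X_{t+1} = X_t (Id − E[A_t]) + B_t`, with `A_t` random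
nonnegative definite with `‖A_t‖₂ ≤ 2` a.s., `∑ ‖B_t‖_F < ∞`, and the products
`(∏_{s=t}^T (Id − E[A_s])) Q → 0` as `T → ∞` for every `t`, then `X_t Q → 0`. -/
theorem stmt_8 {Ω : Type*} [MeasureSpace Ω] [IsProbabilityMeasure (volume : Measure Ω)]
    {n p : ℕ} (A : ℕ → Ω → Matrix (Fin n) (Fin n) ℝ)
    (hpsd : ∀ t, ∀ᵐ ω, (A t ω).PosSemidef)
    (hbdd : ∀ t, ∀ᵐ ω, specNorm (A t ω) ≤ 2)
    (hint : ∀ t i j, Integrable (fun ω => A t ω i j))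
    (B : ℕ → Matrix (Fin p) (Fin n) ℝ)
    (hB : Summable (fun t => frobNorm (B t)))
    (Q : Matrix (Fin n) (Fin n) ℝ) (hQsymm : Qᵀ = Q) (hQproj : Q * Q = Q)
    (hprod : ∀ t, Tendsto (fun T => ordProd (fun s => 1 - mExp (A s)) t T * Q)
      atTop (nhds 0))
    (X : ℕ → Matrix (Fin p) (Fin n) ℝ)
    (hrec : ∀ t, X (t + 1) = X t * (1 - mExp (A t)) + B t) :
    Tendsto (fun t => X t * Q) atTop (nhds 0) := by
  set M : ℕ → Matrix (Fin n) (Fin n) ℝ := fun t => 1 - mExp (A t) with hMdef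
  have hM : ∀ t, specNorm (M t) ≤ 1 := fun t =>
    step_bound (A t) (hpsd t) (hbdd t) (fun i j => hint t i j)
  have hcf := closed_form M B X hrec
  set c : ℕ → ℝ := fun t => frobNorm (B t) with hcdef
  set g : ℕ → ℕ → ℝ := fun t T => specNorm (ordProd M (t + 1) T * Q) with hgdef
  set K : ℝ := specNorm Q with hKdef
  have hcnn : ∀ t, 0 ≤ c t := fun t => Real.sqrt_nonneg _
  have hg0 : ∀ t T, 0 ≤ g t T := fun t T => specNorm_nonneg _
  have hgK : ∀ t T, g t T ≤ K := by
    intro t T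
    calc g t T ≤ specNorm (ordProd M (t + 1) T) * specNorm Q := specNorm_mul_le _ _
      _ ≤ 1 * K := by
          apply mul_le_mul_of_nonneg_right (specNorm_ordProd_le M hM _ _) (specNorm_nonneg _)
      _ = K := one_mul _
  have hspec0 : ∀ t : ℕ, Tendsto (fun T => specNorm (ordProd M t T * Q)) atTop (nhds 0) := by
    intro t
    have := (continuous_specNorm.tendsto 0).comp (hprod t)
    simpa [Function.comp_def, specNorm_zero] using this
  have hgt : ∀ t, Tendsto (fun T => g t T) atTop (nhds 0) := fun t => hspec0 (t + 1)
  have hsumlim := sum_limit c hcnn hB g K (specNorm_nonneg _) hg0 hgK hgt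
  have h0t : Tendsto (fun T => specNorm (X 0) * specNorm (ordProd M 0 T * Q)) atTop (nhds 0) := by
    have := (hspec0 0).const_mul (specNorm (X 0))
    simpa using this
  have keybound : ∀ T, specNorm (X (T + 1) * Q) ≤
      specNorm (X 0) * specNorm (ordProd M 0 T * Q) +
        ∑ t ∈ Finset.range (T + 1), c t * g t T := by
    intro T
    rw [hcf T, Matrix.add_mul, Matrix.sum_mul]
    refine (specNorm_add_le _ _).trans (add_le_add ?_ ?_)
    · rw [Matrix.mul_assoc]
      exact specNorm_mul_le _ _
    · refine (specNorm_sum_le _ _).trans (Finset.sum_le_sum fun t _ => ?_)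
      rw [Matrix.mul_assoc]
      calc specNorm (B t * (ordProd M (t + 1) T * Q))
          ≤ specNorm (B t) * g t T := specNorm_mul_le _ _
        _ ≤ c t * g t T :=
            mul_le_mul_of_nonneg_right (specNorm_le_frobNorm _) (hg0 t T)
  have hnorm : Tendsto (fun T => specNorm (X (T + 1) * Q)) atTop (nhds 0) := by
    have hlim : Tendsto (fun T => specNorm (X 0) * specNorm (ordProd M 0 T * Q) +
        ∑ t ∈ Finset.range (T + 1), c t * g t T) atTop (nhds 0) := by
      have := h0t.add hsumlim
      simpa using this
    exact squeeze_zero (fun T => specNorm_nonneg _) keybound hlim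
  have hmat : Tendsto (fun T => X (T + 1) * Q) atTop (nhds 0) :=
    tendsto_of_specNorm _ hnorm
  exact (tendsto_add_atTop_iff_nat 1).mp hmat
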